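/- For V_28 with any a ∈ [0,1]: if x⁽⁰⁾ ∈ S² with x₁⁽⁰⁾ > 0, then the trajectory V_28ⁿ(x⁽⁰⁾) converges to e₁ = (1,0,0); in particular the first coordinate satisfies x₁⁽ⁿ⁺¹⁾ = x₁⁽ⁿ⁾(2 − x₁⁽ⁿ⁾) and converges monotonically to 1. -/

import Mathlib

def V28 (a : ℝ) (p : ℝ × ℝ × ℝ) : ℝ × ℝ × ℝ :=
  (p.1^2 + 2*p.1*(1-p.1), p.2.2^2 + 2*a*p.2.1*p.2.2, p.2.1^2 + 2*(1-a)*p.2.1*p.2.2)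

def S2 : Set (ℝ × ℝ × ℝ) :=
  {p | 0 ≤ p.1 ∧ 0 ≤ p.2.1 ∧ 0 ≤ p.2.2 ∧ p.1 + p.2.1 + p.2.2 = 1}

lemma V28_mem (a : ℝ) (ha : a ∈ Set.Icc (0:ℝ) 1) {p : ℝ × ℝ × ℝ} (hp : p ∈ S2) :
    V28 a p ∈ S2 := by
  obtain ⟨h1, h2, h3, h4⟩ := hp
  obtain ⟨ha0, ha1⟩ := ha
  simp only [V28, S2, Set.mem_setOf_eq]
  refine ⟨by nlinarith, by nlinarith [mul_nonneg (mul_nonneg ha0 h2) h3], by nlinarith [mul_nonneg (mul_nonneg (sub_nonneg.2 ha1) h2) h3], by nlinarith⟩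

theorem V28_converges_e1 (a : ℝ) (ha : a ∈ Set.Icc (0:ℝ) 1)
    (x : ℝ × ℝ × ℝ) (hx : x ∈ S2) (h1 : 0 < x.1) :
    Filter.Tendsto (fun n => (V28 a)^[n] x) Filter.atTop
      (nhds ((1:ℝ), (0:ℝ), (0:ℝ))) ∧
    (∀ n : ℕ, ((V28 a)^[n+1] x).1 = ((V28 a)^[n] x).1 * (2 - ((V28 a)^[n] x).1)) ∧
    Monotone (fun n => ((V28 a)^[n] x).1) ∧
    Filter.Tendsto (fun n => ((V28 a)^[n] x).1) Filter.atTop (nhds 1) := by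
  -- invariance
  have hmem : ∀ n, (V28 a)^[n] x ∈ S2 := by
    intro n
    induction n with
    | zero => simpa using hx
    | succ n ih => rw [Function.iterate_succ_apply']; exact V28_mem a ha ih
  have hrec : ∀ n : ℕ, ((V28 a)^[n+1] x).1 = ((V28 a)^[n] x).1 * (2 - ((V28 a)^[n] x).1) := by
    intro n
    rw [Function.iterate_succ_apply']
    simp only [V28]; ring
  -- key formula
  have hkey : ∀ n : ℕ, 1 - ((V28 a)^[n] x).1 = (1 - x.1)^(2^n) := by
    intro n
    induction n with
    | zero => simp
    | succ n ih =>
      have := hrec n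
      rw [pow_succ, pow_mul, ← ih]
      nlinarith [this]
  have hx1le : x.1 ≤ 1 := by
    obtain ⟨_, h2, h3, h4⟩ := hx; linarith
  have hr0 : 0 ≤ 1 - x.1 := by linarith
  have hr1 : 1 - x.1 < 1 := by linarith
  -- tendsto of first coordinate
  have h2pow : Filter.Tendsto (fun n : ℕ => 2^n) Filter.atTop Filter.atTop :=
    tendsto_pow_atTop_atTop_of_one_lt one_lt_two
  have hpow : Filter.Tendsto (fun n : ℕ => (1 - x.1)^(2^n)) Filter.atTop (nhds 0) :=
    (tendsto_pow_atTop_nhds_zero_of_lt_one hr0 hr1).comp h2pow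
  have ht1 : Filter.Tendsto (fun n => ((V28 a)^[n] x).1) Filter.atTop (nhds 1) := by
    have : (fun n => ((V28 a)^[n] x).1) = fun n => 1 - (1 - x.1)^(2^n) := by
      funext n; have := hkey n; linarith
    rw [this]
    simpa using (tendsto_const_nhds (x := (1:ℝ)) (f := Filter.atTop)).sub hpow
  -- second and third coordinates to 0 by squeeze
  have hsum : ∀ n, ((V28 a)^[n] x).2.1 + ((V28 a)^[n] x).2.2 = (1 - x.1)^(2^n) := by
    intro n
    obtain ⟨_, _, _, h4⟩ := hmem n
    have := hkey n; linarith
  have ht2 : Filter.Tendsto (fun n => ((V28 a)^[n] x).2.1) Filter.atTop (nhds 0) := by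
    apply squeeze_zero (fun n => (hmem n).2.1) (fun n => ?_) hpow
    have := hsum n; have := (hmem n).2.2.1; linarith
  have ht3 : Filter.Tendsto (fun n => ((V28 a)^[n] x).2.2) Filter.atTop (nhds 0) := by
    apply squeeze_zero (fun n => (hmem n).2.2.1) (fun n => ?_) hpow
    have := hsum n; have := (hmem n).2.1; linarith
  refine ⟨?_, hrec, ?_, ht1⟩
  · have : Filter.Tendsto (fun n => (((V28 a)^[n] x).1, ((V28 a)^[n] x).2.1, ((V28 a)^[n] x).2.2))
        Filter.atTop (nhds ((1:ℝ), (0:ℝ), (0:ℝ))) := ht1.prodMk_nhds (ht2.prodMk_nhds ht3)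
    simpa using this
  · apply monotone_nat_of_le_succ
    intro n
    rw [hrec n]
    have h0 : 0 ≤ ((V28 a)^[n] x).1 := (hmem n).1
    have h1' : ((V28 a)^[n] x).1 ≤ 1 := by
      obtain ⟨_, h2, h3, h4⟩ := hmem n; linarith
    nlinarith
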